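/- Let n ≥ 2, let Δⁿ = {x ∈ ℝⁿ : x_i ≥ 0 for all i, Σ_i x_i = 1} be the standard probability simplex with vertex set {e₁, …, eₙ} (the standard basis vectors), and let f(x) = (1/2)‖x‖², whose minimizer over Δⁿ is x* = (1/n, …, 1/n). Then the infimum, over all nonempty proper subsets S ⊊ {e₁, …, eₙ} and all x in the convex hull of S, of the strong Wolfe gap w(x, S) = max_{u ∈ S} ⟨x, u⟩ − min_{v ∈ Δⁿ} ⟨x, v⟩, equals 1/(n − 1). (Note ∇f(x) = x, and x* does not belong to the convex hull of any proper subset of the vertices.) -/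

import Mathlib

open Set
open scoped RealInnerProductSpace

private lemma simplex_coords_of_mem_convexHull {n : ℕ}
    {S : Set (EuclideanSpace ℝ (Fin n))}
    (hS : S ⊆ Set.range (fun i : Fin n => (EuclideanSpace.single i (1 : ℝ))))
    {x : EuclideanSpace ℝ (Fin n)} (hx : x ∈ convexHull ℝ S) :
    (∀ i, 0 ≤ x i) ∧ (∑ i, x i = 1) ∧
      (∀ j, EuclideanSpace.single j (1:ℝ) ∉ S → x j = 0) := by
  set C : Set (EuclideanSpace ℝ (Fin n)) :=
    {y | (∀ i, 0 ≤ y i) ∧ (∑ i, y i = 1) ∧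
      (∀ j, EuclideanSpace.single j (1:ℝ) ∉ S → y j = 0)} with hC
  have hSC : S ⊆ C := by
    intro u hu
    obtain ⟨k, rfl⟩ := hS hu
    refine ⟨fun i => ?_, by simp [EuclideanSpace.single_apply], fun j hj => ?_⟩
    · simp only [EuclideanSpace.single_apply]
      split <;> norm_num
    · have hkj : j ≠ k := by rintro rfl; exact hj hu
      simp [EuclideanSpace.single_apply, hkj]
  have hCconv : Convex ℝ C := by
    rintro y ⟨hy0, hysum, hyz⟩ z ⟨hz0, hzsum, hzz⟩ a b ha hb hab
    refine ⟨fun i => ?_, ?_, fun j hj => ?_⟩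
    · have := hy0 i; have := hz0 i
      simp only [PiLp.add_apply, PiLp.smul_apply, smul_eq_mul]
      nlinarith
    · simp only [PiLp.add_apply, PiLp.smul_apply, smul_eq_mul]
      rw [Finset.sum_add_distrib, ← Finset.mul_sum, ← Finset.mul_sum, hysum, hzsum]
      linarith
    · simp [PiLp.add_apply, PiLp.smul_apply, hyz j hj, hzz j hj]
  exact convexHull_min hSC hCconv hx

private lemma sInf_simplex_image_eq_zero {n : ℕ} (x : EuclideanSpace ℝ (Fin n))
    (hx : ∀ i, 0 ≤ x i) (j : Fin n) (hj : x j = 0) :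
    sInf ((fun v => ⟪x, v⟫) ''
      {p : EuclideanSpace ℝ (Fin n) | (∀ i, 0 ≤ p i) ∧ ∑ i, p i = 1}) = 0 := by
  have hmem : (0 : ℝ) ∈ (fun v => ⟪x, v⟫) ''
      {p : EuclideanSpace ℝ (Fin n) | (∀ i, 0 ≤ p i) ∧ ∑ i, p i = 1} := by
    refine ⟨EuclideanSpace.single j 1, ⟨fun i => ?_, by simp [EuclideanSpace.single_apply]⟩, ?_⟩
    · simp only [EuclideanSpace.single_apply]; split <;> norm_num
    · simp [EuclideanSpace.inner_single_right, hj]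
  have hlb : ∀ r ∈ (fun v => ⟪x, v⟫) ''
      {p : EuclideanSpace ℝ (Fin n) | (∀ i, 0 ≤ p i) ∧ ∑ i, p i = 1}, (0:ℝ) ≤ r := by
    rintro r ⟨p, ⟨hp0, _⟩, rfl⟩
    simp only [PiLp.inner_apply, RCLike.inner_apply, conj_trivial]
    exact Finset.sum_nonneg fun i _ => mul_nonneg (hp0 i) (hx i)
  exact le_antisymm (csInf_le ⟨0, hlb⟩ hmem) (le_csInf ⟨0, hmem⟩ hlb)

/-- **critical strong Wolfe gap on the simplex.** For `f(x) = ½‖x‖²` over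
the standard probability simplex `Δⁿ ⊆ ℝⁿ` (`n ≥ 2`), whose gradient is `∇f(x) = x` and
whose minimizer is `x* = (1/n, …, 1/n)`, the infimum over all nonempty proper subsets
`S` of the vertex set `{e₁, …, eₙ}` and all `x ∈ conv(S)` of the strong Wolfe gap
`w(x, S) = max_{u ∈ S} ⟪x, u⟫ - min_{v ∈ Δⁿ} ⟪x, v⟫` equals `1/(n - 1)`. -/
theorem critical_strong_wolfe_gap_simplex
    (n : ℕ) (hn : 2 ≤ n) :
    sInf {w : ℝ |
        ∃ S : Set (EuclideanSpace ℝ (Fin n)), ∃ x : EuclideanSpace ℝ (Fin n),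
          S.Nonempty ∧
          S ⊆ Set.range (fun i : Fin n => (EuclideanSpace.single i (1 : ℝ))) ∧
          S ≠ Set.range (fun i : Fin n => (EuclideanSpace.single i (1 : ℝ))) ∧
          x ∈ convexHull ℝ S ∧
          w = sSup ((fun u => ⟪x, u⟫) '' S) -
              sInf ((fun v => ⟪x, v⟫) ''
                {p : EuclideanSpace ℝ (Fin n) | (∀ i, 0 ≤ p i) ∧ ∑ i, p i = 1})} =
      1 / ((n : ℝ) - 1) := by
  classical
  set e : Fin n → EuclideanSpace ℝ (Fin n) :=
    fun i : Fin n => (EuclideanSpace.single i (1 : ℝ)) with he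
  set A : Set ℝ := {w : ℝ |
        ∃ S : Set (EuclideanSpace ℝ (Fin n)), ∃ x : EuclideanSpace ℝ (Fin n),
          S.Nonempty ∧ S ⊆ Set.range e ∧ S ≠ Set.range e ∧
          x ∈ convexHull ℝ S ∧
          w = sSup ((fun u => ⟪x, u⟫) '' S) -
              sInf ((fun v => ⟪x, v⟫) ''
                {p : EuclideanSpace ℝ (Fin n) | (∀ i, 0 ≤ p i) ∧ ∑ i, p i = 1})} with hA
  have hn1 : (1:ℝ) ≤ (n:ℝ) - 1 := by
    have : (2:ℝ) ≤ (n:ℝ) := by exact_mod_cast hn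
    linarith
  have hn1pos : (0:ℝ) < (n:ℝ) - 1 := by linarith
  have einj : Function.Injective e := by
    intro a b hab
    by_contra hne
    have h1 : e a a = e b a := by rw [hab]
    simp [he, EuclideanSpace.single_apply, hne] at h1
  -- Lower bound
  have hlb : ∀ w ∈ A, 1 / ((n:ℝ) - 1) ≤ w := by
    rintro w ⟨S, x, hne, hSsub, hSne, hxS, rfl⟩
    obtain ⟨hx0, hxsum, hxz⟩ := simplex_coords_of_mem_convexHull hSsub hxS
    have hmiss : ∃ j, e j ∉ S := by
      by_contra h; push_neg at h
      exact hSne (Set.Subset.antisymm hSsub (by rintro _ ⟨i, rfl⟩; exact h i))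
    obtain ⟨j, hj⟩ := hmiss
    rw [sInf_simplex_image_eq_zero x hx0 j (hxz j hj), sub_zero]
    set T : Finset (Fin n) := Finset.univ.filter (fun i => e i ∈ S) with hT
    have hjT : j ∉ T := by simp [hT, hj]
    have hTcard : (T.card : ℝ) ≤ (n:ℝ) - 1 := by
      have hTneq : T ≠ Finset.univ := by
        intro h
        exact hjT (by rw [h]; exact Finset.mem_univ j)
      have h1 : T.card < n := by
        have := Finset.card_lt_card (Finset.ssubset_univ_iff.mpr hTneq)
        simpa using this
      have h2 : T.card + 1 ≤ n := h1
      have : (T.card : ℝ) + 1 ≤ (n : ℝ) := by exact_mod_cast h2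
      linarith
    have hTne : T.Nonempty := by
      obtain ⟨u, hu⟩ := hne
      obtain ⟨k, rfl⟩ := hSsub hu
      exact ⟨k, by simp [hT, hu]⟩
    have hTpos : (0:ℝ) < (T.card : ℝ) := by exact_mod_cast Finset.card_pos.mpr hTne
    have hTsum : ∑ i ∈ T, x i = 1 := by
      rw [← hxsum]
      apply Finset.sum_subset (Finset.subset_univ T)
      intro i _ hiT
      exact hxz i (by simpa [hT] using hiT)
    obtain ⟨i, hiT, hi⟩ := Finset.exists_le_of_sum_le hTne
      (f := fun _ => 1 / (T.card : ℝ)) (g := fun i => x i)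
      (by rw [Finset.sum_const, hTsum, nsmul_eq_mul]
          rw [mul_one_div, div_self (ne_of_gt hTpos)])
    have hfin : ((fun u => ⟪x, u⟫) '' S).Finite :=
      ((Set.finite_range e).subset hSsub).image _
    have hsup : x i ≤ sSup ((fun u => ⟪x, u⟫) '' S) := by
      apply le_csSup hfin.bddAbove
      exact ⟨e i, by simpa [hT] using hiT, by simp [he, EuclideanSpace.inner_single_right]⟩
    calc 1 / ((n:ℝ) - 1) ≤ 1 / (T.card : ℝ) := by
          apply one_div_le_one_div_of_le hTpos hTcard
      _ ≤ x i := hi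
      _ ≤ _ := hsup
  -- Membership: the value is attained
  have hnpos : 0 < n := by omega
  set i0 : Fin n := ⟨0, hnpos⟩ with hi0
  set i1 : Fin n := ⟨1, by omega⟩ with hi1
  have hi01 : i1 ≠ i0 := by simp [hi0, hi1, Fin.ext_iff]
  set T0 : Finset (Fin n) := Finset.univ.erase i0 with hT0
  have hT0card : (T0.card : ℝ) = (n:ℝ) - 1 := by
    have : T0.card = n - 1 := by
      rw [hT0, Finset.card_erase_of_mem (Finset.mem_univ _), Finset.card_univ, Fintype.card_fin]
    rw [this, Nat.cast_sub (by omega), Nat.cast_one]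
  set c : ℝ := ((n:ℝ) - 1)⁻¹ with hc
  set S0 : Set (EuclideanSpace ℝ (Fin n)) := e '' {i | i ≠ i0} with hS0
  set x0 : EuclideanSpace ℝ (Fin n) := c • ∑ i ∈ T0, e i with hx0
  have hx0coord : ∀ k, x0 k = c * (if k ∈ T0 then 1 else 0) := by
    intro k
    rw [hx0]
    simp only [PiLp.smul_apply, smul_eq_mul]
    congr 1
    rw [show ((∑ i ∈ T0, e i) k) = ∑ i ∈ T0, e i k from by
      rw [WithLp.ofLp_sum]; exact Finset.sum_apply k T0 _]
    simp only [he, EuclideanSpace.single_apply]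
    rw [Finset.sum_ite_eq T0 k (fun _ => (1:ℝ))]
  have hx0nonneg : ∀ k, 0 ≤ x0 k := by
    intro k
    rw [hx0coord]
    have : 0 ≤ c := by positivity
    split <;> nlinarith
  have hx0i0 : x0 i0 = 0 := by
    rw [hx0coord]; simp [hT0]
  have hmemA : 1 / ((n:ℝ) - 1) ∈ A := by
    refine ⟨S0, x0, ⟨e i1, ⟨i1, hi01, rfl⟩⟩, ?_, ?_, ?_, ?_⟩
    · rintro _ ⟨i, _, rfl⟩; exact ⟨i, rfl⟩
    · intro h
      have : e i0 ∈ S0 := h ▸ ⟨i0, rfl⟩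
      obtain ⟨k, hk, hke⟩ := this
      exact hk (einj hke)
    · have hmass : T0.centerMass (fun _ => (1:ℝ)) e ∈ convexHull ℝ S0 := by
        apply Finset.centerMass_mem_convexHull
        · intro i _; exact zero_le_one
        · rw [Finset.sum_const, nsmul_eq_mul, mul_one]
          exact_mod_cast (by rw [hT0card]; exact hn1pos : (0:ℝ) < (T0.card:ℝ))
        · intro i hi
          exact ⟨i, by simpa [hT0] using hi, rfl⟩
      convert hmass using 1
      rw [Finset.centerMass, hx0]
      simp only [one_smul, Finset.sum_const, nsmul_eq_mul, mul_one]
      rw [hT0card, hc]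
    · have himg : (fun u => ⟪x0, u⟫) '' S0 = {c} := by
        apply Set.Subset.antisymm
        · rintro _ ⟨_, ⟨k, hk, rfl⟩, rfl⟩
          have hkT : k ∈ T0 := Finset.mem_erase.mpr ⟨hk, Finset.mem_univ k⟩
          simp only [Set.mem_singleton_iff, he, EuclideanSpace.inner_single_right]
          rw [conj_trivial, one_mul]
          rw [hx0coord, if_pos hkT, mul_one]
        · rintro r hr
          rw [Set.mem_singleton_iff] at hr
          subst hr
          refine ⟨e i1, ⟨i1, hi01, rfl⟩, ?_⟩
          simp only [he, EuclideanSpace.inner_single_right]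
          rw [conj_trivial, one_mul, hx0coord, if_pos (by simp [hT0, hi01]), mul_one]
      rw [himg, csSup_singleton, sInf_simplex_image_eq_zero x0 hx0nonneg i0 hx0i0,
        sub_zero, hc, one_div]
  exact le_antisymm (csInf_le ⟨1 / ((n:ℝ) - 1), hlb⟩ hmemA) (le_csInf ⟨_, hmemA⟩ hlb)
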